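/- The map κ_T⁺ : 𝕊_T⁺ → Sp(d,ℝ) sending (a,s,t₁,t̃) to the block matrix [[a^{−1/2}T_s^{−T}, 0],[a^{−1/2}σ(t₁,t̃)T_s^{−T}, a^{1/2}T_s]] is an injective group homomorphism from the connected Toeplitz shearlet group into the symplectic group. -/

import Mathlib

open Matrix Finset

def Tfin (d : ℕ) (s : Fin (d - 1) → ℝ) : Matrix (Fin d) (Fin d) ℝ :=
  Matrix.of fun i j =>
    if h : (i : ℕ) < (j : ℕ) then
      s ⟨(j : ℕ) - (i : ℕ) - 1, by have := j.isLt; omega⟩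
    else if (i : ℕ) = (j : ℕ) then 1 else 0

def sharpF (d : ℕ) (s s' : Fin (d - 1) → ℝ) : Fin (d - 1) → ℝ := fun p =>
  s p + s' p + ∑ j ∈ (Finset.range (p : ℕ)).attach,
    s' ⟨j.1, by have := Finset.mem_range.mp j.2; have := p.isLt; omega⟩ *
      s ⟨(p : ℕ) - 1 - j.1, by have := p.isLt; omega⟩

abbrev ToepShearletPos (d : ℕ) : Type :=
  {a : ℝ // 0 < a} × (Fin (d - 1) → ℝ) × (Fin d → ℝ)

noncomputable def toepMul (d : ℕ) (x y : ToepShearletPos d) : ToepShearletPos d :=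
  ⟨⟨x.1.1 * y.1.1, mul_pos x.1.2 y.1.2⟩, sharpF d x.2.1 y.2.1,
    x.2.2 + x.1.1 • (Tfin d x.2.1).mulVec y.2.2⟩

noncomputable def sigd (d : ℕ) (t : Fin d → ℝ) : Matrix (Fin d) (Fin d) ℝ :=
  Matrix.of fun i j =>
    if (i : ℕ) = 0 then (if (j : ℕ) = 0 then t j else (1 / 2) * t j)
    else if (j : ℕ) = 0 then (1 / 2) * t i
    else 0

noncomputable def kappaT (d : ℕ) (x : ToepShearletPos d) :
    Matrix (Fin d ⊕ Fin d) (Fin d ⊕ Fin d) ℝ :=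
  Matrix.fromBlocks (x.1.1 ^ (-(1 : ℝ) / 2) • ((Tfin d x.2.1)⁻¹)ᵀ) 0
    (x.1.1 ^ (-(1 : ℝ) / 2) • (sigd d x.2.2 * ((Tfin d x.2.1)⁻¹)ᵀ))
    (x.1.1 ^ ((1 : ℝ) / 2) • Tfin d x.2.1)

/-! ### Auxiliary lemmas -/

/-- Padded coefficient sequence. -/
def Shat (d : ℕ) (s : Fin (d - 1) → ℝ) : ℕ → ℝ := fun n =>
  if n = 0 then 1 else if h : n - 1 < d - 1 then s ⟨n - 1, h⟩ else 0

lemma Tfin_apply' (d : ℕ) (s : Fin (d - 1) → ℝ) (i j : Fin d) :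
    Tfin d s i j = if (i : ℕ) ≤ (j : ℕ) then Shat d s ((j : ℕ) - (i : ℕ)) else 0 := by
  unfold Tfin Shat
  simp only [of_apply]
  rcases lt_trichotomy (i : ℕ) (j : ℕ) with h | h | h
  · rw [dif_pos h, if_pos (le_of_lt h), if_neg (by omega), dif_pos (by have := j.isLt; omega)]
  · rw [dif_neg (by omega), if_pos (by omega), if_pos (by omega), if_pos (by omega)]
  · rw [dif_neg (by omega), if_neg (by omega), if_neg (by omega)]

lemma Shat_conv (d : ℕ) (s s' : Fin (d - 1) → ℝ) (n : ℕ) (hn : n < d) :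
    Shat d (sharpF d s s') n = ∑ k ∈ Finset.range (n + 1), Shat d s k * Shat d s' (n - k) := by
  rcases n with _ | p
  · simp [Shat]
  · have hp : p < d - 1 := by omega
    rw [Finset.sum_range_succ, Finset.sum_range_succ']
    have h0 : Shat d s 0 = 1 := by simp [Shat]
    have hlast : Shat d s' (p + 1 - (p + 1)) = 1 := by simp [Shat]
    have hLHS : Shat d (sharpF d s s') (p + 1) = sharpF d s s' ⟨p, hp⟩ := by
      simp only [Shat, Nat.add_sub_cancel]
      rw [if_neg (by omega), dif_pos hp]
    rw [hLHS, hlast, h0, mul_one, one_mul]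
    unfold sharpF
    have key : ∑ j ∈ (Finset.range ((⟨p, hp⟩ : Fin (d - 1)) : ℕ)).attach,
        s' ⟨j.1, by have := Finset.mem_range.mp j.2; omega⟩ *
          s ⟨p - 1 - j.1, by omega⟩
        = ∑ k ∈ Finset.range p, Shat d s (k + 1) * Shat d s' (p + 1 - (k + 1)) := by
      rw [← Finset.sum_range_reflect (fun k => Shat d s (k + 1) * Shat d s' (p + 1 - (k + 1))) p]
      rw [← Finset.sum_attach (Finset.range p)
        (fun k => Shat d s (p - 1 - k + 1) * Shat d s' (p + 1 - (p - 1 - k + 1)))]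
      apply Finset.sum_congr rfl
      intro j hj
      have hjp : j.1 < p := Finset.mem_range.mp j.2
      have e1 : Shat d s (p - 1 - j.1 + 1) = s ⟨p - 1 - j.1, by omega⟩ := by
        simp only [Shat]
        rw [if_neg (by omega), dif_pos (by omega)]
        exact congrArg s (Fin.ext (by simp))
      have e2 : Shat d s' (p + 1 - (p - 1 - j.1 + 1)) = s' ⟨j.1, by omega⟩ := by
        simp only [Shat]
        rw [if_neg (by omega), dif_pos (by omega)]
        congr 1
        apply Fin.ext
        simp
        omega
      rw [e1, e2, mul_comm]
    rw [key]
    have eS : Shat d s (p + 1) = s ⟨p, hp⟩ := by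
      simp only [Shat]; rw [if_neg (by omega), dif_pos (by omega)]
      exact congrArg s (Fin.ext (by simp))
    have eS' : Shat d s' (p + 1 - 0) = s' ⟨p, hp⟩ := by
      simp only [Shat]; rw [if_neg (by omega), dif_pos (by omega)]
      exact congrArg s' (Fin.ext (by simp))
    rw [eS, eS']
    ring

lemma Tfin_mul (d : ℕ) (s s' : Fin (d - 1) → ℝ) :
    Tfin d (sharpF d s s') = Tfin d s * Tfin d s' := by
  ext i j
  rw [Matrix.mul_apply]
  simp only [Tfin_apply']
  symm
  by_cases hij : (i : ℕ) ≤ (j : ℕ)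
  · rw [if_pos hij, Shat_conv d s s' _ (by have := j.isLt; omega)]
    have step1 : ∀ m : Fin d,
        (if (i : ℕ) ≤ (m : ℕ) then Shat d s ((m : ℕ) - i) else 0) *
          (if (m : ℕ) ≤ (j : ℕ) then Shat d s' ((j : ℕ) - m) else 0)
        = if (m : ℕ) ∈ Finset.Icc (i : ℕ) (j : ℕ) then
            Shat d s ((m : ℕ) - i) * Shat d s' ((j : ℕ) - m) else 0 := by
      intro m
      by_cases h1 : (i : ℕ) ≤ (m : ℕ) <;> by_cases h2 : (m : ℕ) ≤ (j : ℕ) <;>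
        simp [h1, h2, Finset.mem_Icc]
    simp only [step1]
    rw [Fin.sum_univ_eq_sum_range
      (fun n => if n ∈ Finset.Icc (i : ℕ) (j : ℕ) then
        Shat d s (n - i) * Shat d s' ((j : ℕ) - n) else 0) d]
    rw [Finset.sum_ite_mem]
    rw [Finset.inter_eq_right.mpr (by
      intro n hn
      rw [Finset.mem_Icc] at hn
      exact Finset.mem_range.mpr (by have := j.isLt; omega))]
    rw [← Finset.Ico_add_one_right_eq_Icc, Finset.sum_Ico_eq_sum_range]
    have : (j : ℕ) + 1 - i = (j : ℕ) - i + 1 := by omega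
    rw [this]
    apply Finset.sum_congr rfl
    intro k hk
    have hk' := Finset.mem_range.mp hk
    congr 1
    · congr 1; omega
    · congr 1; omega
  · rw [if_neg hij]
    apply Finset.sum_eq_zero
    intro m _
    by_cases h1 : (i : ℕ) ≤ (m : ℕ)
    · rw [if_neg (show ¬ (m : ℕ) ≤ (j : ℕ) by omega), mul_zero]
    · rw [if_neg h1, zero_mul]

lemma Tfin_det (d : ℕ) (s : Fin (d - 1) → ℝ) : (Tfin d s).det = 1 := by
  have h : (Tfin d s).BlockTriangular id := by
    intro i j hij
    simp only [Tfin, of_apply, id] at *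
    rw [dif_neg (by omega), if_neg (by omega)]
  rw [Matrix.det_of_upperTriangular h]
  apply Finset.prod_eq_one
  intro i _
  simp [Tfin]

lemma Tfin_isUnit_det (d : ℕ) (s : Fin (d - 1) → ℝ) : IsUnit (Tfin d s).det := by
  rw [Tfin_det]; exact isUnit_one

lemma Tfin_isUnit_det_T (d : ℕ) (s : Fin (d - 1) → ℝ) : IsUnit (Tfin d s)ᵀ.det := by
  rw [Matrix.det_transpose, Tfin_det]; exact isUnit_one

lemma TtTinvt (d : ℕ) (s : Fin (d - 1) → ℝ) :
    (Tfin d s)ᵀ * ((Tfin d s)⁻¹)ᵀ = 1 := by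
  rw [Matrix.transpose_nonsing_inv, Matrix.mul_nonsing_inv _ (Tfin_isUnit_det_T d s)]

lemma TinvtTt (d : ℕ) (s : Fin (d - 1) → ℝ) :
    ((Tfin d s)⁻¹)ᵀ * (Tfin d s)ᵀ = 1 := by
  rw [Matrix.transpose_nonsing_inv, Matrix.nonsing_inv_mul _ (Tfin_isUnit_det_T d s)]

lemma mul_vecMulVec {d : ℕ} (M : Matrix (Fin d) (Fin d) ℝ) (u v : Fin d → ℝ) :
    M * Matrix.vecMulVec u v = Matrix.vecMulVec (M *ᵥ u) v := by
  ext i j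
  simp [Matrix.mul_apply, Matrix.vecMulVec_apply, Matrix.mulVec, dotProduct,
    Finset.sum_mul, mul_assoc]

lemma vecMulVec_mul {d : ℕ} (M : Matrix (Fin d) (Fin d) ℝ) (u v : Fin d → ℝ) :
    Matrix.vecMulVec u v * M = Matrix.vecMulVec u (v ᵥ* M) := by
  ext i j
  simp [Matrix.mul_apply, Matrix.vecMulVec_apply, Matrix.vecMul, dotProduct,
    Finset.mul_sum, mul_assoc]

def e0 (d : ℕ) : Fin d → ℝ := fun i => if (i : ℕ) = 0 then 1 else 0

lemma sigd_eq (d : ℕ) (t : Fin d → ℝ) :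
    sigd d t = (1/2 : ℝ) • (Matrix.vecMulVec t (e0 d) + Matrix.vecMulVec (e0 d) t) := by
  ext i j
  simp only [sigd, of_apply, Matrix.smul_apply, Matrix.add_apply, Matrix.vecMulVec_apply, e0,
    smul_eq_mul]
  by_cases hi : (i : ℕ) = 0 <;> by_cases hj : (j : ℕ) = 0
  · have : i = j := Fin.ext (by omega)
    subst this
    simp [hi, hj]; ring
  · simp [hi, hj]
  · simp [hi, hj]
  · simp [hi, hj]

lemma sigd_transpose (d : ℕ) (t : Fin d → ℝ) : (sigd d t)ᵀ = sigd d t := by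
  ext i j
  simp only [Matrix.transpose_apply, sigd, of_apply]
  by_cases hi : (i : ℕ) = 0 <;> by_cases hj : (j : ℕ) = 0
  · have : i = j := Fin.ext (by omega)
    subst this; simp
  · simp [hi, hj]
  · simp [hi, hj]
  · simp [hi, hj]

lemma sigd_add_smul (d : ℕ) (t u : Fin d → ℝ) (a : ℝ) :
    sigd d (t + a • u) = sigd d t + a • sigd d u := by
  ext i j
  simp only [sigd, of_apply, Matrix.add_apply, Matrix.smul_apply, Pi.add_apply, Pi.smul_apply,
    smul_eq_mul]
  split_ifs <;> ring

lemma Tfin_mulVec_e0 (d : ℕ) (hd : 1 ≤ d) (s : Fin (d - 1) → ℝ) :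
    Tfin d s *ᵥ e0 d = e0 d := by
  ext i
  rw [Matrix.mulVec, dotProduct]
  rw [Finset.sum_eq_single (⟨0, hd⟩ : Fin d)]
  · simp only [Tfin, of_apply, e0]
    rw [dif_neg (by omega)]
    by_cases hi : (i : ℕ) = 0 <;> simp [hi]
  · intro b _ hb
    have : (b : ℕ) ≠ 0 := fun h => hb (Fin.ext h)
    simp [e0, this]
  · simp

lemma sigd_mulVec (d : ℕ) (hd : 1 ≤ d) (s : Fin (d - 1) → ℝ) (v : Fin d → ℝ) :
    sigd d (Tfin d s *ᵥ v) = Tfin d s * sigd d v * (Tfin d s)ᵀ := by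
  rw [sigd_eq, sigd_eq]
  rw [Matrix.mul_smul, Matrix.smul_mul]
  congr 1
  rw [Matrix.mul_add, Matrix.add_mul]
  rw [mul_vecMulVec, mul_vecMulVec, vecMulVec_mul, vecMulVec_mul]
  rw [Matrix.vecMul_transpose, Matrix.vecMul_transpose]
  rw [Tfin_mulVec_e0 d hd]

lemma rpow_nhalf_mul_half (a : ℝ) (ha : 0 < a) :
    a ^ (-(1 : ℝ) / 2) * a ^ ((1 : ℝ) / 2) = 1 := by
  rw [← Real.rpow_add ha]
  norm_num

lemma rpow_nhalf_mul_self (a : ℝ) (ha : 0 < a) :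
    a ^ (-(1 : ℝ) / 2) * a = a ^ ((1 : ℝ) / 2) := by
  nth_rewrite 2 [← Real.rpow_one a]
  rw [← Real.rpow_add ha]
  norm_num

/-- `κ_T⁺` is an injective group homomorphism from the connected Toeplitz
shearlet group into the symplectic group `Sp(d,ℝ)`. -/
theorem kappaT_injective_hom (d : ℕ) (hd : 1 ≤ d) :
    Function.Injective (kappaT d) ∧
    (∀ x y : ToepShearletPos d, kappaT d (toepMul d x y) = kappaT d x * kappaT d y) ∧
    (∀ x : ToepShearletPos d, kappaT d x ∈ Matrix.symplecticGroup (Fin d) ℝ) := by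
  refine ⟨?_, ?_, ?_⟩
  · -- Injectivity
    rintro ⟨⟨a, ha⟩, s, t⟩ ⟨⟨a', ha'⟩, s', t'⟩ h
    unfold kappaT at h
    simp only at h
    -- extract blocks
    have h22 : a ^ ((1 : ℝ) / 2) • Tfin d s = a' ^ ((1 : ℝ) / 2) • Tfin d s' := by
      have := congrArg Matrix.toBlocks₂₂ h
      simpa [Matrix.toBlocks_fromBlocks₂₂] using this
    have h21 : a ^ (-(1 : ℝ) / 2) • (sigd d t * ((Tfin d s)⁻¹)ᵀ)
        = a' ^ (-(1 : ℝ) / 2) • (sigd d t' * ((Tfin d s')⁻¹)ᵀ) := by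
      have := congrArg Matrix.toBlocks₂₁ h
      simpa [Matrix.toBlocks_fromBlocks₂₁] using this
    -- a = a' from the (0,0) entry of h22
    have haa : a = a' := by
      have h00 := congrFun (congrFun h22 ⟨0, hd⟩) ⟨0, hd⟩
      simp only [Matrix.smul_apply, Tfin, of_apply, smul_eq_mul] at h00
      rw [dif_neg (by omega), dif_neg (by omega)] at h00
      norm_num at h00
      have : (a ^ ((1:ℝ)/2)) ^ (2:ℕ) = (a' ^ ((1:ℝ)/2)) ^ (2:ℕ) := by rw [h00]
      rwa [← Real.rpow_natCast (a ^ ((1:ℝ)/2)) 2, ← Real.rpow_natCast (a' ^ ((1:ℝ)/2)) 2,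
        ← Real.rpow_mul ha.le, ← Real.rpow_mul ha'.le, show ((1:ℝ)/2) * (2:ℕ) = 1 by norm_num,
        Real.rpow_one, Real.rpow_one] at this
    subst haa
    have hpow : a ^ ((1 : ℝ) / 2) ≠ 0 := ne_of_gt (Real.rpow_pos_of_pos ha _)
    have hpow' : a ^ (-(1 : ℝ) / 2) ≠ 0 := ne_of_gt (Real.rpow_pos_of_pos ha _)
    have hT : Tfin d s = Tfin d s' := smul_right_injective _ hpow h22
    have hss : s = s' := by
      funext p
      have := congrFun (congrFun hT ⟨0, hd⟩) ⟨(p : ℕ) + 1, by have := p.isLt; omega⟩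
      simp only [Tfin, of_apply] at this
      rw [dif_pos (by simp), dif_pos (by simp)] at this
      convert this using 2
      all_goals exact Fin.ext (by simp)
    subst hss
    have hσ : sigd d t = sigd d t' := by
      have h1 : sigd d t * ((Tfin d s)⁻¹)ᵀ = sigd d t' * ((Tfin d s)⁻¹)ᵀ :=
        smul_right_injective _ hpow' h21
      have h2 := congrArg (· * (Tfin d s)ᵀ) h1
      simpa [Matrix.mul_assoc, TinvtTt d s] using h2
    have htt : t = t' := by
      funext j
      by_cases hj : (j : ℕ) = 0
      · have := congrFun (congrFun hσ ⟨0, hd⟩) j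
        simp only [sigd, of_apply] at this
        simpa [hj] using this
      · have := congrFun (congrFun hσ ⟨0, hd⟩) j
        simp only [sigd, of_apply] at this
        simp [hj] at this
        linarith
    rw [htt]
  · -- Homomorphism
    rintro ⟨⟨a, ha⟩, s, t⟩ ⟨⟨a', ha'⟩, s', t'⟩
    unfold kappaT toepMul
    simp only
    rw [Matrix.fromBlocks_multiply, Matrix.fromBlocks_inj]
    have hmulpow : ∀ e : ℝ, (a * a') ^ e = a ^ e * a' ^ e := fun e =>
      Real.mul_rpow ha.le ha'.le
    have hTT : ((Tfin d (sharpF d s s'))⁻¹)ᵀ = ((Tfin d s)⁻¹)ᵀ * ((Tfin d s')⁻¹)ᵀ := by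
      rw [Tfin_mul, Matrix.mul_inv_rev, Matrix.transpose_mul]
    refine ⟨?_, ?_, ?_, ?_⟩
    · rw [Matrix.zero_mul, add_zero, Matrix.smul_mul, Matrix.mul_smul, smul_smul,
        hTT, hmulpow]
    · rw [Matrix.mul_zero, Matrix.zero_mul, add_zero]
    · have hmid : Tfin d s * sigd d t' * (Tfin d s)ᵀ * (((Tfin d s)⁻¹)ᵀ * ((Tfin d s')⁻¹)ᵀ)
          = Tfin d s * (sigd d t' * ((Tfin d s')⁻¹)ᵀ) := by
        rw [← Matrix.mul_assoc, Matrix.mul_assoc (Tfin d s * sigd d t'), TtTinvt,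
          Matrix.mul_one, Matrix.mul_assoc]
      rw [hTT, hmulpow, sigd_add_smul, sigd_mulVec d hd, Matrix.add_mul,
        Matrix.smul_mul _ (Tfin d s * sigd d t' * (Tfin d s)ᵀ), hmid, smul_add, smul_smul,
        Matrix.smul_mul, Matrix.mul_smul, smul_smul, Matrix.smul_mul, Matrix.mul_smul, smul_smul]
      congr 1
      · rw [Matrix.mul_assoc]
      · rw [mul_right_comm, rpow_nhalf_mul_self a ha]
    · rw [Matrix.mul_zero, zero_add, Matrix.smul_mul, Matrix.mul_smul, smul_smul, hmulpow,
        Tfin_mul]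
  · -- Symplectic
    rintro ⟨⟨a, ha⟩, s, t⟩
    rw [SymplecticGroup.mem_iff]
    unfold kappaT
    simp only [Matrix.J]
    rw [Matrix.fromBlocks_transpose, Matrix.fromBlocks_multiply, Matrix.fromBlocks_multiply]
    rw [Matrix.fromBlocks_inj]
    have h12 : a ^ (-(1:ℝ)/2) • ((Tfin d s)⁻¹)ᵀ * (a ^ ((1:ℝ)/2) • Tfin d s)ᵀ = 1 := by
      rw [Matrix.transpose_smul, Matrix.smul_mul, Matrix.mul_smul, smul_smul,
        rpow_nhalf_mul_half a ha, TinvtTt, one_smul]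
    have h21 : a ^ ((1:ℝ)/2) • Tfin d s * (a ^ (-(1:ℝ)/2) • ((Tfin d s)⁻¹)ᵀ)ᵀ = 1 := by
      rw [Matrix.transpose_smul, Matrix.transpose_transpose, Matrix.smul_mul, Matrix.mul_smul,
        smul_smul, mul_comm, rpow_nhalf_mul_half a ha,
        Matrix.mul_nonsing_inv _ (Tfin_isUnit_det d s), one_smul]
    have hDC : a ^ ((1:ℝ)/2) • Tfin d s * (a ^ (-(1:ℝ)/2) • (sigd d t * ((Tfin d s)⁻¹)ᵀ))ᵀ
        = sigd d t := by
      rw [Matrix.transpose_smul, Matrix.transpose_mul, Matrix.transpose_transpose,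
        sigd_transpose, Matrix.smul_mul, Matrix.mul_smul, smul_smul, mul_comm,
        rpow_nhalf_mul_half a ha, one_smul, ← Matrix.mul_assoc,
        Matrix.mul_nonsing_inv _ (Tfin_isUnit_det d s), Matrix.one_mul]
    have hCD : a ^ (-(1:ℝ)/2) • (sigd d t * ((Tfin d s)⁻¹)ᵀ) * (a ^ ((1:ℝ)/2) • Tfin d s)ᵀ
        = sigd d t := by
      rw [Matrix.transpose_smul, Matrix.smul_mul, Matrix.mul_smul, smul_smul,
        rpow_nhalf_mul_half a ha, one_smul, Matrix.mul_assoc, TinvtTt, Matrix.mul_one]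
    refine ⟨?_, ?_, ?_, ?_⟩
    · simp
    · simp only [Matrix.mul_zero, Matrix.zero_mul, zero_add, add_zero, Matrix.mul_neg,
        Matrix.mul_one, Matrix.transpose_zero, Matrix.neg_mul]
      rw [h12]
    · simp only [Matrix.mul_zero, Matrix.zero_mul, zero_add, add_zero, Matrix.mul_neg,
        Matrix.mul_one, Matrix.transpose_zero, Matrix.neg_mul]
      rw [h21]
    · simp only [Matrix.mul_zero, Matrix.zero_mul, zero_add, add_zero, Matrix.mul_neg,
        Matrix.mul_one, Matrix.transpose_zero, Matrix.neg_mul]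
      rw [hDC, hCD]
      exact add_neg_cancel _
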